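/- arXiv:0902.4581 — 2 statements merged into one kernel-verified Lean document; each statement's English description precedes it below -/
import Mathlib

section
/- Let n ≥ 2 and g ≥ 0 be integers, let q₀ and q₁ be real polynomials, and let c be a real number with q₀(1) = q₁(1) = c. For t ∈ (0,1) define F(t) = (1−t^{2n−2})(1−t^{2n})(1+t)^{2g}(1−t²)⁻¹ · ∑_{d=1}^{∞} q_{d mod 2}(t) · t^{2d(n−1)+(g−1)(2n−3)} (the exponent 2d(n−1)+(g−1)(2n−3) is an integer ≥ 1 for all d ≥ 1, and the series converges absolutely for each t ∈ (0,1)). Then F(t) tends to n · 2^{2g} · c as t tends to 1 from the left. -/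
open Filter

private def posEquiv : ℕ ≃ {d : ℕ // 1 ≤ d} :=
  ⟨fun k => ⟨k + 1, by omega⟩, fun d => (d : ℕ) - 1,
   fun k => by simp, fun d => by
      ext
      have := d.2
      simp
      omega⟩

@[simp] private lemma posEquiv_coe (k : ℕ) : ((posEquiv k : {d : ℕ // 1 ≤ d}) : ℕ) = k + 1 := rfl

/-- Let `n ≥ 2`, `g ≥ 0`, `q₀, q₁` real polynomials with `q₀(1) = q₁(1) = c`.  For
`t ∈ (0,1)` let
`F(t) = (1−t^{2n−2})(1−t^{2n})(1+t)^{2g}(1−t²)⁻¹ ∑_{d≥1} q_{d mod 2}(t) t^{2d(n−1)+(g−1)(2n−3)}`.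
Then `F(t) → n · 2^{2g} · c` as `t → 1⁻`. -/
theorem unstable_strata_limit (n g : ℕ) (hn : 2 ≤ n) (q₀ q₁ : Polynomial ℝ) (c : ℝ)
    (h0 : q₀.eval 1 = c) (h1 : q₁.eval 1 = c) :
    Tendsto
      (fun t : ℝ =>
        (1 - t ^ (2 * n - 2)) * (1 - t ^ (2 * n)) * (1 + t) ^ (2 * g) * (1 - t ^ 2)⁻¹ *
          ∑' d : {d : ℕ // 1 ≤ d},
            (if (d : ℕ) % 2 = 0 then q₀ else q₁).eval t *
              t ^ (2 * (d : ℤ) * ((n : ℤ) - 1) + ((g : ℤ) - 1) * (2 * (n : ℤ) - 3)))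
      (nhdsWithin 1 (Set.Ioo 0 1))
      (nhds ((n : ℝ) * 2 ^ (2 * g) * c)) := by
  have hn1 : 1 ≤ n := by omega
  set E : ℤ := ((g : ℤ) - 1) * (2 * (n : ℤ) - 3) with hE
  set G : ℝ → ℝ := fun t =>
    (∑ i ∈ Finset.range n, (t ^ 2) ^ i) *
      ((1 + t) ^ (2 * g) * t ^ E *
        (q₁.eval t * t ^ (2 * (n - 1)) + q₀.eval t * (t ^ (2 * (n - 1))) ^ 2)) /
      (1 + t ^ (2 * (n - 1))) with hGdef
  -- the closed form tends to the limit
  have hlim : Tendsto G (nhdsWithin 1 (Set.Ioo 0 1)) (nhds ((n : ℝ) * 2 ^ (2 * g) * c)) := by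
    have hc : ContinuousAt G 1 := by
      apply ContinuousAt.div
      · apply ContinuousAt.mul
        · fun_prop
        · apply ContinuousAt.mul
          · apply ContinuousAt.mul
            · fun_prop
            · exact continuousAt_zpow₀ (1 : ℝ) E (Or.inl one_ne_zero)
          · fun_prop
      · fun_prop
      · norm_num
    have hval : G 1 = (n : ℝ) * 2 ^ (2 * g) * c := by
      simp [hGdef, h0, h1, one_zpow]
      ring
    have := hc.tendsto
    rw [hval] at this
    exact this.mono_left nhdsWithin_le_nhds
  -- pointwise equality on (0,1)
  refine Tendsto.congr' ?_ hlim
  filter_upwards [self_mem_nhdsWithin] with t ht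
  obtain ⟨ht0, ht1⟩ := ht
  have htne : t ≠ 0 := ne_of_gt ht0
  set r : ℝ := t ^ (2 * (n - 1)) with hr
  have hr0 : 0 < r := pow_pos ht0 _
  have hr1 : r < 1 := by
    apply pow_lt_one₀ ht0.le ht1
    omega
  have hr2 : r ^ 2 < 1 := by nlinarith
  set A : ℝ := q₁.eval t with hA
  set B : ℝ := q₀.eval t with hB
  -- compute the tsum
  have hterm : ∀ d : {d : ℕ // 1 ≤ d},
      (if (d : ℕ) % 2 = 0 then q₀ else q₁).eval t *
        t ^ (2 * (d : ℤ) * ((n : ℤ) - 1) + E)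
      = t ^ E * ((if (d : ℕ) % 2 = 0 then B else A) * r ^ (d : ℕ)) := by
    intro d
    rw [zpow_add₀ htne]
    have h2 : (2 * (d : ℤ) * ((n : ℤ) - 1)) = ((2 * (n - 1) * (d : ℕ) : ℕ) : ℤ) := by
      push_cast [Nat.cast_sub hn1]
      ring
    rw [h2, zpow_natCast, pow_mul]
    rcases Nat.even_or_odd (d : ℕ) with h | h
    · simp [Nat.even_iff.mp h, hB, hr]
      ring
    · simp [Nat.odd_iff.mp h, hA, hr]
      ring
  have hsum_e : Summable fun m : ℕ => A * r * (r ^ 2) ^ m :=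
    (summable_geometric_of_lt_one (by positivity) hr2).mul_left _
  have hsum_o : Summable fun m : ℕ => B * r ^ 2 * (r ^ 2) ^ m :=
    (summable_geometric_of_lt_one (by positivity) hr2).mul_left _
  set f : ℕ → ℝ := fun k => (if (k + 1) % 2 = 0 then B else A) * r ^ (k + 1) with hf
  have hfe : ∀ m : ℕ, f (2 * m) = A * r * (r ^ 2) ^ m := by
    intro m
    have h3 : ¬ ((2 * m + 1) % 2 = 0) := by omega
    simp only [hf, if_neg h3, pow_succ, pow_mul]
    ring
  have hfo : ∀ m : ℕ, f (2 * m + 1) = B * r ^ 2 * (r ^ 2) ^ m := by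
    intro m
    have h3 : (2 * m + 1 + 1) % 2 = 0 := by omega
    simp only [hf, h3]
    norm_num
    rw [show 2 * m + 1 + 1 = 2 * (m + 1) from by ring, pow_mul, pow_succ]
    ring
  have htsum : (∑' d : {d : ℕ // 1 ≤ d},
      (if (d : ℕ) % 2 = 0 then q₀ else q₁).eval t *
        t ^ (2 * (d : ℤ) * ((n : ℤ) - 1) + E))
      = t ^ E * ((A * r + B * r ^ 2) * (1 - r ^ 2)⁻¹) := by
    rw [tsum_congr hterm, tsum_mul_left]
    congr 1
    have h1 : (∑' d : {d : ℕ // 1 ≤ d}, (if (d : ℕ) % 2 = 0 then B else A) * r ^ (d : ℕ))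
        = ∑' k : ℕ, f k := by
      rw [← posEquiv.tsum_eq (fun d : {d : ℕ // 1 ≤ d} =>
        (if (d : ℕ) % 2 = 0 then B else A) * r ^ (d : ℕ))]
      exact tsum_congr fun k => by simp [hf]; by_cases h : (k + 1) % 2 = 0 <;> simp [h]
    rw [h1,
      ← tsum_even_add_odd ((summable_congr hfe).mpr hsum_e) ((summable_congr hfo).mpr hsum_o),
      tsum_congr hfe, tsum_congr hfo, tsum_mul_left, tsum_mul_left,
      tsum_geometric_of_lt_one (by positivity) hr2]
    ring
  -- algebraic identity
  show G t = _
  rw [htsum]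
  have hgeo : 1 - t ^ (2 * n) = (1 - t ^ 2) * ∑ i ∈ Finset.range n, (t ^ 2) ^ i := by
    have h := geom_sum_mul (t ^ 2) n
    rw [pow_mul]
    linear_combination h
  have h2n2 : 2 * n - 2 = 2 * (n - 1) := by omega
  have ht2 : (1 : ℝ) - t ^ 2 ≠ 0 := by nlinarith
  have h1r : (1 : ℝ) - r ≠ 0 := by nlinarith
  have h1pr : (1 : ℝ) + r ≠ 0 := by positivity
  have hrr : (1 : ℝ) - r ^ 2 = (1 - r) * (1 + r) := by ring
  rw [hGdef]
  simp only
  rw [h2n2, hgeo, hrr]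
  rw [← hr, ← hA, ← hB]
  rw [mul_inv, div_eq_mul_inv]
  linear_combination (-(∑ i ∈ Finset.range n, (t ^ 2) ^ i) * (1 + t) ^ (2 * g) * t ^ E * (A * r + B * r ^ 2) * (1 + r)⁻¹ * ((1 - t ^ 2) * (1 - t ^ 2)⁻¹)) * mul_inv_cancel₀ h1r + (-(∑ i ∈ Finset.range n, (t ^ 2) ^ i) * (1 + t) ^ (2 * g) * t ^ E * (A * r + B * r ^ 2) * (1 + r)⁻¹) * mul_inv_cancel₀ ht2
end

section
/- Let g ≥ 0 and n ≥ 1, let S¹ denote the circle group (the unit circle in ℂ), and let T = (S¹)^n. The subspace { X ∈ T^{g+1} : (X₀ X₁ ⋯ X_g)² = 1 } of T^{g+1}, with the subspace topology, is homeomorphic to (S¹)^{ng} × (ℤ/2ℤ)^n. -/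
/-- `ℤ/2ℤ` carries the discrete topology. -/
instance : TopologicalSpace (ZMod 2) := ⊥

instance : DiscreteTopology (ZMod 2) := ⟨rfl⟩

namespace SurfaceAux

noncomputable section

/-- `-1` as an element of the circle. -/
def negOne : Circle := ⟨-1, by
  show (-1 : ℂ) ∈ Metric.sphere 0 1
  simp⟩

lemma negOne_ne_one : negOne ≠ 1 := by
  intro h
  have := congrArg (fun z : Circle => (z : ℂ)) h
  simp only [negOne, Circle.coe_one] at this
  norm_num at this

lemma circle_sq_eq_one_iff (z : Circle) : z ^ 2 = 1 ↔ z = 1 ∨ z = negOne := by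
  constructor
  · intro h
    have h' : (z : ℂ) ^ 2 = 1 := by
      have := congrArg (fun w : Circle => (w : ℂ)) h
      simpa [pow_two] using this
    rcases sq_eq_one_iff.mp h' with h1 | h1
    · left; exact Subtype.ext (by simpa using h1)
    · right; exact Subtype.ext (by simpa [negOne] using h1)
  · rintro (rfl | rfl)
    · simp
    · exact Subtype.ext (by rw [Circle.coe_pow]; show ((-1 : ℂ)) ^ 2 = 1; norm_num)

lemma card_sqrtOne : Nat.card {z : Circle // z ^ 2 = 1} = 2 := by
  rw [Nat.card_congr ((Equiv.subtypeEquivRight circle_sq_eq_one_iff).trans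
    (Equiv.subtypeEquivRight (q := fun z => z ∈ ({1, negOne} : Set Circle))
      (fun z => by simp)))]
  rw [Nat.card_coe_set_eq, Set.ncard_pair (Ne.symm negOne_ne_one)]

instance : Finite {z : Circle // z ^ 2 = 1} :=
  Nat.finite_of_card_ne_zero (by rw [card_sqrtOne]; norm_num)

/-- The square roots of `1` in the circle, as an equiv with `ZMod 2`. -/
def sqrtOneEquiv : {z : Circle // z ^ 2 = 1} ≃ ZMod 2 :=
  Classical.choice (Finite.card_eq.mp (by rw [card_sqrtOne, Nat.card_zmod]))

/-- The solutions of `p ^ 2 = 1` in `(S¹)^n`, as an equiv with `(ZMod 2)^n`. -/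
def solEquiv (n : ℕ) : {p : Fin n → Circle // p ^ 2 = 1} ≃ (Fin n → ZMod 2) :=
  ((Equiv.subtypeEquivRight (fun p => by
      rw [funext_iff]; simp)).trans
    (Equiv.subtypePiEquivPi)).trans (Equiv.piCongrRight fun _ => sqrtOneEquiv)

/-- Any equivalence between discrete spaces is a homeomorphism. -/
def ofDiscrete {X Y : Type*} [TopologicalSpace X] [TopologicalSpace Y]
    [DiscreteTopology X] [DiscreteTopology Y] (e : X ≃ Y) : X ≃ₜ Y where
  toEquiv := e
  continuous_toFun := continuous_of_discreteTopology
  continuous_invFun := continuous_of_discreteTopology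

/-- The index equivalence. -/
def indexEquiv (g n : ℕ) : Fin g × Fin n ≃ Fin (n * g) :=
  finProdFinEquiv.trans (finCongr (Nat.mul_comm g n))

/-- `(S¹)^{n·g}` is homeomorphic to `((S¹)^n)^g`. -/
def piFinHomeo (g n : ℕ) : (Fin g → Fin n → Circle) ≃ₜ (Fin (n * g) → Circle) where
  toEquiv := (Equiv.curry (Fin g) (Fin n) Circle).symm.trans
    (Equiv.arrowCongr (indexEquiv g n) (Equiv.refl Circle))
  continuous_toFun := by
    refine continuous_pi fun k => ?_
    show Continuous fun Y : Fin g → Fin n → Circle =>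
      Y ((indexEquiv g n).symm k).1 ((indexEquiv g n).symm k).2
    exact (continuous_apply _).comp (continuous_apply _)
  continuous_invFun := by
    refine continuous_pi fun j => continuous_pi fun i => ?_
    show Continuous fun f : Fin (n * g) → Circle => f (indexEquiv g n (j, i))
    exact continuous_apply _

/-- Splitting off the constraint. -/
def splitHomeo (g n : ℕ) :
    ({X : Fin (g + 1) → (Fin n → Circle) | (∏ i, X i) ^ 2 = 1} :
        Set (Fin (g + 1) → (Fin n → Circle))) ≃ₜ
      {p : Fin n → Circle // p ^ 2 = 1} × (Fin g → Fin n → Circle) where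
  toFun X := (⟨∏ i, X.1 i, X.2⟩, fun j => X.1 j.succ)
  invFun q := ⟨Fin.cons (q.1.1 * (∏ j, q.2 j)⁻¹) q.2, by
    show (∏ i, Fin.cons (q.1.1 * (∏ j, q.2 j)⁻¹) q.2 i) ^ 2 = 1
    rw [Fin.prod_cons, inv_mul_cancel_right]
    exact q.1.2⟩
  left_inv X := by
    apply Subtype.ext
    dsimp only
    have h0 : (∏ i, X.1 i) * (∏ j : Fin g, X.1 j.succ)⁻¹ = X.1 0 := by
      rw [Fin.prod_univ_succ, mul_inv_cancel_right]
    show Fin.cons ((∏ i, X.1 i) * (∏ j : Fin g, X.1 j.succ)⁻¹) (fun j : Fin g => X.1 j.succ) = X.1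
    rw [h0]
    exact Fin.cons_self_tail X.1
  right_inv q := by
    dsimp only
    refine Prod.ext ?_ ?_
    · apply Subtype.ext
      show (∏ i, Fin.cons (q.1.1 * (∏ j, q.2 j)⁻¹) q.2 i) = q.1.1
      rw [Fin.prod_cons, inv_mul_cancel_right]
    · funext j
      simp
  continuous_toFun := by
    apply Continuous.prodMk
    · apply Continuous.subtype_mk
      exact continuous_finset_prod _ fun i _ =>
        (continuous_apply i).comp continuous_subtype_val
    · exact continuous_pi fun j => (continuous_apply _).comp continuous_subtype_val
  continuous_invFun := by
    apply Continuous.subtype_mk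
    refine continuous_pi fun i => ?_
    refine Fin.cases ?_ ?_ i
    · have : Continuous fun q : {p : Fin n → Circle // p ^ 2 = 1} ×
          (Fin g → Fin n → Circle) => q.1.1 * (∏ j, q.2 j)⁻¹ :=
        (continuous_subtype_val.comp continuous_fst).mul
          ((continuous_finset_prod _ fun j _ =>
            (continuous_apply j).comp continuous_snd).inv)
      exact this.congr fun q => by simp
    · intro j
      have : Continuous fun q : {p : Fin n → Circle // p ^ 2 = 1} ×
          (Fin g → Fin n → Circle) => q.2 j :=
        (continuous_apply j).comp continuous_snd
      exact this.congr fun q => by simp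

end

end SurfaceAux

/-- For `T = (S¹)^n`, the subspace `{X ∈ T^{g+1} : (X₀X₁⋯X_g)² = 1}` of `T^{g+1}` is
homeomorphic to `(S¹)^{ng} × (ℤ/2ℤ)^n`. -/
theorem hom_surfaceGroup_torus_homeomorph (g n : ℕ) (hn : 1 ≤ n) :
    Nonempty
      (({X : Fin (g + 1) → (Fin n → Circle) | (∏ i, X i) ^ 2 = 1} :
          Set (Fin (g + 1) → (Fin n → Circle))) ≃ₜ
        (Fin (n * g) → Circle) × (Fin n → ZMod 2)) := by
  haveI : Finite {p : Fin n → Circle // p ^ 2 = 1} :=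
    Finite.of_equiv _ (SurfaceAux.solEquiv n).symm
  exact ⟨(SurfaceAux.splitHomeo g n).trans
    ((Homeomorph.prodCongr (SurfaceAux.ofDiscrete (SurfaceAux.solEquiv n))
      (SurfaceAux.piFinHomeo g n)).trans (Homeomorph.prodComm _ _))⟩
end
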